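/- With z₂ = ρ/p, z₃ = u, the jump of the second 1D entropy variable V₂ = ρWu/p satisfies [[V₂]] = ⟨uW⟩[[z₂]] + ⟨z₂⟩⟨W⟩[[z₃]] + ⟨z₂⟩⟨z₃⟩⟨⟨z₃⟩⟩_L[[z₃]], where [[W]] = ⟨⟨z₃⟩⟩_L[[z₃]]. -/

import Mathlib

open Real

/-- Jump of the second 1D entropy variable `V₂ = ρWu/p`:
`[[V₂]] = ⟨uW⟩[[z₂]] + ⟨z₂⟩⟨W⟩[[z₃]] + ⟨z₂⟩⟨z₃⟩⟨⟨z₃⟩⟩_L[[z₃]]` with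
`z₂ = ρ/p`, `z₃ = u`. -/
theorem jump_V2 (ρL uL pL ρR uR pR : ℝ)
    (hρL : 0 < ρL) (hρR : 0 < ρR) (hpL : 0 < pL) (hpR : 0 < pR)
    (huL : |uL| < 1) (huR : |uR| < 1)
    (WL WR LM : ℝ)
    (hWL : WL = 1 / Real.sqrt (1 - uL ^ 2))
    (hWR : WR = 1 / Real.sqrt (1 - uR ^ 2))
    (hLM : LM = (uL + uR) /
      (Real.sqrt (1 - uL ^ 2) * Real.sqrt (1 - uR ^ 2) *
        (Real.sqrt (1 - uL ^ 2) + Real.sqrt (1 - uR ^ 2)))) :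
    (ρR * WR * uR / pR) - (ρL * WL * uL / pL)
      = ((uL * WL + uR * WR) / 2) * (ρR / pR - ρL / pL)
        + ((ρL / pL + ρR / pR) / 2) * ((WL + WR) / 2) * (uR - uL)
        + ((ρL / pL + ρR / pR) / 2) * ((uL + uR) / 2) * LM * (uR - uL) := by
  have hL : (0:ℝ) < 1 - uL ^ 2 := by nlinarith [sq_abs uL, abs_nonneg uL]
  have hR : (0:ℝ) < 1 - uR ^ 2 := by nlinarith [sq_abs uR, abs_nonneg uR]
  set sL := Real.sqrt (1 - uL ^ 2) with hsL
  set sR := Real.sqrt (1 - uR ^ 2) with hsR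
  have hsLpos : 0 < sL := Real.sqrt_pos.mpr hL
  have hsRpos : 0 < sR := Real.sqrt_pos.mpr hR
  have hsL2 : sL ^ 2 = 1 - uL ^ 2 := Real.sq_sqrt hL.le
  have hsR2 : sR ^ 2 = 1 - uR ^ 2 := Real.sq_sqrt hR.le
  have hjump : WR - WL = LM * (uR - uL) := by
    rw [hWL, hWR, hLM]
    field_simp
    linear_combination hsL2 - hsR2
  have hW : WR = WL + LM * (uR - uL) := by linarith
  rw [hW]
  field_simp
  ring
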